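/- Let A ∈ ℝ^{m×np} have column blocks A = [A₁,…,A_p], A_j ∈ ℝ^{m×n}, let s_* = 1/(max_i inf_{P_i} max_j ‖δ_{ij} I_n − P_iᵀ A_j‖₂), and fix s with 1 < s < s_*. Define g_s(η) = max_i inf_{P_i ∈ ℝ^{m×n}} ( sη · max_j ‖δ_{ij} I_n − P_iᵀ A_j‖₂ + ‖P_i‖₂ ). If η^* is the unique positive fixed point of g_s, then η^* ≥ 1/ω₂(A,s). Similarly, with Q = A^T A and h_s(η) = max_i inf_{P_i ∈ ℝ^{np×n}} ( sη · max_j ‖δ_{ij} I_n − P_iᵀ Q_j‖₂ + Σ_{l=1}^p ‖P_i^l‖₂ ) (P_i^l the n×n row blocks of P_i), the unique positive fixed point η^* of h_s satisfies η^* ≥ 1/ω_{b∞}(A^T A, s). -/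

import Mathlib

open MeasureTheory ProbabilityTheory Finset Matrix

/-- Euclidean norm of a finitely-indexed real vector. -/
noncomputable def vnorm {ι : Type*} [Fintype ι] (v : ι → ℝ) : ℝ :=
  Real.sqrt (∑ i, (v i) ^ 2)

/-- Euclidean norm of the `i`-th block of `x ∈ ℝ^{np}` (blocks indexed by `Fin p`). -/
noncomputable def bnorm {n p : ℕ} (x : Fin p × Fin n → ℝ) (i : Fin p) : ℝ :=
  vnorm (fun j => x (i, j))

/-- Block-ℓ1 norm: `‖x‖_{b1} = ∑ i, ‖x_i‖₂`. -/
noncomputable def bl1 {n p : ℕ} (x : Fin p × Fin n → ℝ) : ℝ :=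
  ∑ i, bnorm x i

/-- Block-ℓ∞ norm: `‖x‖_{b∞} = max_i ‖x_i‖₂`. -/
noncomputable def blinf {n p : ℕ} (x : Fin p × Fin n → ℝ) : ℝ :=
  ⨆ i, bnorm x i

open scoped Classical in
/-- Block support: indices of nonzero blocks. -/
noncomputable def bsupp {n p : ℕ} (x : Fin p × Fin n → ℝ) : Finset (Fin p) :=
  Finset.univ.filter (fun i => ∃ j, x (i, j) ≠ 0)

/-- `ω₂(A,s) = inf { ‖Az‖₂ / ‖z‖_{b∞} : z ≠ 0, ‖z‖_{b1} ≤ s ‖z‖_{b∞} }`. -/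
noncomputable def omega2 {m n p : ℕ} (A : Matrix (Fin m) (Fin p × Fin n) ℝ) (s : ℝ) : ℝ :=
  sInf {r | ∃ z : Fin p × Fin n → ℝ, z ≠ 0 ∧ bl1 z ≤ s * blinf z ∧
    r = vnorm (A.mulVec z) / blinf z}

/-- `ω_{b∞}(AᵀA,s) = inf { ‖AᵀAz‖_{b∞} / ‖z‖_{b∞} : z ≠ 0, ‖z‖_{b1} ≤ s ‖z‖_{b∞} }`. -/
noncomputable def omegaBInf {m n p : ℕ} (A : Matrix (Fin m) (Fin p × Fin n) ℝ) (s : ℝ) : ℝ :=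
  sInf {r | ∃ z : Fin p × Fin n → ℝ, z ≠ 0 ∧ bl1 z ≤ s * blinf z ∧
    r = blinf ((Aᵀ * A).mulVec z) / blinf z}

/-- Block ℓ1-constrained minimal singular value
`ρ_s(A) = inf { ‖Az‖₂ / ‖z‖₂ : z ≠ 0, ‖z‖_{b1}² ≤ s ‖z‖₂² }`. -/
noncomputable def rhoCMSV {m n p : ℕ} (A : Matrix (Fin m) (Fin p × Fin n) ℝ) (s : ℝ) : ℝ :=
  sInf {r | ∃ z : Fin p × Fin n → ℝ, z ≠ 0 ∧ (bl1 z) ^ 2 ≤ s * (vnorm z) ^ 2 ∧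
    r = vnorm (A.mulVec z) / vnorm z}

/-- Spectral norm (largest singular value) of a real matrix, as the ℓ2→ℓ2 operator norm. -/
noncomputable def specNorm {ι κ : Type*} [Fintype ι] [Fintype κ] (M : Matrix ι κ ℝ) : ℝ :=
  sSup {r | ∃ v : κ → ℝ, vnorm v ≤ 1 ∧ r = vnorm (M.mulVec v)}

/-- The `j`-th column block (of `n` columns) of a matrix with `np` columns. -/
def colBlock {ι : Type*} {n p : ℕ} (Q : Matrix ι (Fin p × Fin n) ℝ) (j : Fin p) :
    Matrix ι (Fin n) ℝ := Matrix.of fun r c => Q r (j, c)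

/-- The `l`-th row block (of `n` rows) of a matrix with `np` rows. -/
def rowBlock {κ : Type*} {n p : ℕ} (P : Matrix (Fin p × Fin n) κ ℝ) (l : Fin p) :
    Matrix (Fin n) κ ℝ := Matrix.of fun r c => P (l, r) c

/-- `δ_{ij} Iₙ`. -/
def deltaId (n : ℕ) {p : ℕ} (i j : Fin p) : Matrix (Fin n) (Fin n) ℝ :=
  if i = j then 1 else 0

/-- Orlicz ψ₂ norm of a scalar random variable. -/
noncomputable def psi2 {Ω : Type*} [MeasurableSpace Ω] (μ : Measure Ω) (Y : Ω → ℝ) : ℝ :=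
  sInf {t | 0 < t ∧ ∫ ω, Real.exp ((Y ω) ^ 2 / t ^ 2) ∂μ ≤ 2}


section Infrastructure

noncomputable def euc {ι : Type*} [Fintype ι] (v : ι → ℝ) : EuclideanSpace ℝ ι :=
  (WithLp.equiv 2 (ι → ℝ)).symm v

lemma vnorm_eq_norm {ι : Type*} [Fintype ι] (v : ι → ℝ) :
    vnorm v = ‖euc v‖ := by
  rw [EuclideanSpace.norm_eq, vnorm]
  congr 1
  apply Finset.sum_congr rfl
  intro i _
  rw [Real.norm_eq_abs, sq_abs]
  rfl

noncomputable def toCLM {ι κ : Type*} [Fintype ι] [Fintype κ] [DecidableEq κ]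
    (M : Matrix ι κ ℝ) : EuclideanSpace ℝ κ →L[ℝ] EuclideanSpace ℝ ι :=
  LinearMap.toContinuousLinearMap (Matrix.toEuclideanLin M)

lemma toCLM_apply {ι κ : Type*} [Fintype ι] [Fintype κ] [DecidableEq κ]
    (M : Matrix ι κ ℝ) (v : κ → ℝ) : toCLM M (euc v) = euc (M.mulVec v) := rfl

lemma specNorm_eq {ι κ : Type*} [Fintype ι] [Fintype κ] [DecidableEq κ]
    (M : Matrix ι κ ℝ) : specNorm M = ‖toCLM M‖ := by
  rw [← ContinuousLinearMap.sSup_unitClosedBall_eq_norm (toCLM M)]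
  apply congrArg sSup
  ext r
  constructor
  · rintro ⟨v, hv, rfl⟩
    refine ⟨euc v, ?_, ?_⟩
    · rw [Metric.mem_closedBall, dist_zero_right]
      rw [vnorm_eq_norm] at hv; exact hv
    · exact ((vnorm_eq_norm _).trans (congrArg norm (toCLM_apply M v).symm)).symm
  · rintro ⟨x, hx, rfl⟩
    refine ⟨WithLp.equiv 2 (κ → ℝ) x, ?_, ?_⟩
    · rw [vnorm_eq_norm]
      rw [Metric.mem_closedBall, dist_zero_right] at hx
      exact hx
    · exact ((vnorm_eq_norm _).trans (congrArg norm (toCLM_apply M _).symm)).symm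

lemma vnorm_nonneg' {ι : Type*} [Fintype ι] (v : ι → ℝ) : 0 ≤ vnorm v :=
  Real.sqrt_nonneg _

lemma euc_add {ι : Type*} [Fintype ι] (u v : ι → ℝ) : euc (u + v) = euc u + euc v := rfl

lemma euc_sum {ι κ : Type*} [Fintype ι] [Fintype κ] (f : κ → ι → ℝ) :
    euc (∑ j, f j) = ∑ j, euc (f j) := by
  exact WithLp.toLp_sum (p := 2) (V := ι → ℝ) Finset.univ f

lemma vnorm_add_le {ι : Type*} [Fintype ι] (u v : ι → ℝ) :
    vnorm (u + v) ≤ vnorm u + vnorm v := by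
  rw [vnorm_eq_norm, vnorm_eq_norm, vnorm_eq_norm, euc_add]; exact norm_add_le _ _

lemma vnorm_sum_le {ι κ : Type*} [Fintype ι] [Fintype κ] (f : κ → ι → ℝ) :
    vnorm (∑ j, f j) ≤ ∑ j, vnorm (f j) := by
  rw [vnorm_eq_norm, euc_sum]
  refine (norm_sum_le _ _).trans ?_
  exact le_of_eq (Finset.sum_congr rfl fun j _ => (vnorm_eq_norm _).symm)

lemma vnorm_pos {ι : Type*} [Fintype ι] {v : ι → ℝ} (hv : v ≠ 0) : 0 < vnorm v := by
  rw [vnorm_eq_norm]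
  rw [norm_pos_iff]
  intro h
  exact hv (funext fun i => congrFun (congrArg WithLp.ofLp h) i)

lemma specNorm_nonneg {ι κ : Type*} [Fintype ι] [Fintype κ] [DecidableEq κ]
    (M : Matrix ι κ ℝ) : 0 ≤ specNorm M := by
  rw [specNorm_eq]; exact norm_nonneg _

lemma vnorm_mulVec_le {ι κ : Type*} [Fintype ι] [Fintype κ] [DecidableEq κ]
    (M : Matrix ι κ ℝ) (v : κ → ℝ) : vnorm (M.mulVec v) ≤ specNorm M * vnorm v := by
  rw [vnorm_eq_norm, vnorm_eq_norm (v := v), specNorm_eq, ← toCLM_apply]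
  exact (toCLM M).le_opNorm _

lemma toCLM_transpose {ι κ : Type*} [Fintype ι] [Fintype κ] [DecidableEq ι] [DecidableEq κ]
    (M : Matrix ι κ ℝ) : toCLM Mᵀ = ContinuousLinearMap.adjoint (toCLM M) := by
  rw [toCLM, toCLM, ← LinearMap.adjoint_toContinuousLinearMap]
  congr 1
  rw [← Matrix.toEuclideanLin_conjTranspose_eq_adjoint]
  congr 1

lemma specNorm_transpose {ι κ : Type*} [Fintype ι] [Fintype κ] [DecidableEq ι] [DecidableEq κ]
    (M : Matrix ι κ ℝ) : specNorm Mᵀ = specNorm M := by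
  rw [specNorm_eq, specNorm_eq, toCLM_transpose]
  exact LinearIsometryEquiv.norm_map ContinuousLinearMap.adjoint (toCLM M)

lemma toCLM_mul {ι κ κ' : Type*} [Fintype ι] [Fintype κ] [Fintype κ'] [DecidableEq κ]
    [DecidableEq κ'] (M : Matrix ι κ ℝ) (N : Matrix κ κ' ℝ) :
    toCLM (M * N) = (toCLM M).comp (toCLM N) := by
  ext1 x
  show euc ((M * N).mulVec (WithLp.equiv 2 (κ' → ℝ) x)) = euc (M.mulVec (N.mulVec _))
  rw [← Matrix.mulVec_mulVec]
  rfl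

lemma specNorm_mul_le {ι κ κ' : Type*} [Fintype ι] [Fintype κ] [Fintype κ'] [DecidableEq κ]
    [DecidableEq κ'] (M : Matrix ι κ ℝ) (N : Matrix κ κ' ℝ) :
    specNorm (M * N) ≤ specNorm M * specNorm N := by
  rw [specNorm_eq, specNorm_eq, specNorm_eq, toCLM_mul]
  exact ContinuousLinearMap.opNorm_comp_le _ _

lemma toCLM_sum {α ι κ : Type*} [Fintype ι] [Fintype κ] [DecidableEq κ] [Fintype α]
    (X : α → Matrix ι κ ℝ) : toCLM (∑ l, X l) = ∑ l, toCLM (X l) := by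
  unfold toCLM
  rw [map_sum, map_sum]

lemma specNorm_sum_le {α ι κ : Type*} [Fintype ι] [Fintype κ] [DecidableEq κ] [Fintype α]
    (X : α → Matrix ι κ ℝ) : specNorm (∑ l, X l) ≤ ∑ l, specNorm (X l) := by
  rw [specNorm_eq, toCLM_sum]
  refine (norm_sum_le _ _).trans ?_
  exact le_of_eq (Finset.sum_congr rfl fun l _ => (specNorm_eq _).symm)

lemma specNorm_one_sub_lower {ι : Type*} [Fintype ι] [DecidableEq ι] [Nonempty ι]
    (Y : Matrix ι ι ℝ) : 1 - specNorm Y ≤ specNorm (1 - Y) := by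
  rw [specNorm_eq, specNorm_eq]
  have h1 : toCLM (1 - Y) = ContinuousLinearMap.id ℝ (EuclideanSpace ℝ ι) - toCLM Y := by
    ext1 x
    show euc ((1 - Y).mulVec (WithLp.equiv 2 (ι → ℝ) x)) = _
    rw [Matrix.sub_mulVec, Matrix.one_mulVec]
    rfl
  rw [h1]
  have hid : ‖ContinuousLinearMap.id ℝ (EuclideanSpace ℝ ι)‖ = 1 :=
    ContinuousLinearMap.norm_id
  have h2 : ContinuousLinearMap.id ℝ (EuclideanSpace ℝ ι) =
      (ContinuousLinearMap.id ℝ (EuclideanSpace ℝ ι) - toCLM Y) + toCLM Y := by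
    rw [sub_add_cancel]
  have h3 := norm_add_le (ContinuousLinearMap.id ℝ (EuclideanSpace ℝ ι) - toCLM Y) (toCLM Y)
  rw [← h2, hid] at h3
  linarith

lemma bnorm_nonneg {n p : ℕ} (x : Fin p × Fin n → ℝ) (i : Fin p) : 0 ≤ bnorm x i :=
  vnorm_nonneg' _

lemma bnorm_le_blinf {n p : ℕ} (x : Fin p × Fin n → ℝ) (i : Fin p) : bnorm x i ≤ blinf x :=
  le_ciSup (Set.Finite.bddAbove (Set.finite_range _)) i

lemma blinf_nonneg {n p : ℕ} (x : Fin p × Fin n → ℝ) : 0 ≤ blinf x :=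
  Real.iSup_nonneg (fun i => bnorm_nonneg x i)

lemma blinf_pos {n p : ℕ} {x : Fin p × Fin n → ℝ} (hx : x ≠ 0) : 0 < blinf x := by
  obtain ⟨⟨i, c⟩, h⟩ := Function.ne_iff.mp hx
  refine lt_of_lt_of_le ?_ (bnorm_le_blinf x i)
  apply vnorm_pos
  intro hcon
  exact h (congrFun hcon c)

lemma block_decomp {n p : ℕ} {ι : Type*} [Fintype ι] (B : Matrix ι (Fin p × Fin n) ℝ)
    (P : Matrix ι (Fin n) ℝ) (z : Fin p × Fin n → ℝ) (i : Fin p) :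
    (fun c => z (i, c)) =
      (∑ j, (deltaId n i j - Pᵀ * colBlock B j).mulVec (fun c => z (j, c)))
        + Pᵀ.mulVec (B.mulVec z) := by
  have h1 : (∑ j, (deltaId n i j).mulVec fun c => z (j, c)) = fun c => z (i, c) := by
    have e : ∀ j : Fin p, (deltaId n i j).mulVec (fun c => z (j, c)) =
        if i = j then (fun c => z (j, c)) else 0 := by
      intro j; rw [deltaId]; split <;> simp
    simp_rw [e]
    rw [Finset.sum_ite_eq]
    simp
  have hB : B.mulVec z = ∑ j, (colBlock B j).mulVec (fun c => z (j, c)) := by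
    funext r
    simp only [Matrix.mulVec, dotProduct, colBlock, Matrix.of_apply,
      Fintype.sum_prod_type, Finset.sum_apply]
  have h2 : (∑ j, (Pᵀ * colBlock B j).mulVec fun c => z (j, c)) = Pᵀ.mulVec (B.mulVec z) := by
    rw [hB]
    have := map_sum (Matrix.mulVecLin Pᵀ) (fun j => (colBlock B j).mulVec (fun c => z (j, c)))
      Finset.univ
    simp only [Matrix.mulVecLin_apply] at this
    rw [this]
    apply Finset.sum_congr rfl
    intro j _
    rw [Matrix.mulVec_mulVec]
  have h3 : ∀ j : Fin p, (deltaId n i j - Pᵀ * colBlock B j).mulVec (fun c => z (j, c)) =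
      (deltaId n i j).mulVec (fun c => z (j, c))
        - (Pᵀ * colBlock B j).mulVec (fun c => z (j, c)) := by
    intro j; rw [Matrix.sub_mulVec]
  simp_rw [h3]
  rw [Finset.sum_sub_distrib, h1, h2]
  funext c
  simp

lemma rowBlock_decomp {n p : ℕ}
    (P : Matrix (Fin p × Fin n) (Fin n) ℝ) (w : Fin p × Fin n → ℝ) :
    Pᵀ.mulVec w = ∑ l, ((rowBlock P l)ᵀ).mulVec (fun c => w (l, c)) := by
  funext c
  simp only [Finset.sum_apply, Matrix.mulVec, dotProduct, Matrix.transpose_apply,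
    rowBlock, Matrix.of_apply, Fintype.sum_prod_type]

lemma mul_colBlock_decomp {n p : ℕ}
    (P : Matrix (Fin p × Fin n) (Fin n) ℝ) (Q : Matrix (Fin p × Fin n) (Fin p × Fin n) ℝ)
    (i : Fin p) :
    Pᵀ * colBlock Q i = ∑ l, (rowBlock P l)ᵀ * rowBlock (colBlock Q i) l := by
  ext r c
  simp only [Matrix.sum_apply, Matrix.mul_apply, Matrix.transpose_apply, rowBlock, colBlock,
    Matrix.of_apply, Fintype.sum_prod_type]

lemma eps_limit {x K e0 : ℝ} (he0 : 0 < e0) (hK : 0 ≤ K)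
    (h : ∀ ε : ℝ, 0 < ε → ε ≤ e0 → x ≤ ε * K) : x ≤ 0 := by
  by_contra hx
  push_neg at hx
  rcases eq_or_lt_of_le hK with hK0 | hKpos
  · have := h e0 he0 le_rfl
    rw [← hK0, mul_zero] at this
    linarith
  · have hε : 0 < min e0 (x / (2 * K)) := lt_min he0 (by positivity)
    have h2 := h _ hε (min_le_left _ _)
    have h3 : min e0 (x / (2 * K)) * K ≤ (x / (2 * K)) * K :=
      mul_le_mul_of_nonneg_right (min_le_right _ _) hK
    have h4 : (x / (2 * K)) * K = x / 2 := by
      field_simp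
    linarith

lemma arith_core {s η ε D C M b V : ℝ} (hs : 1 < s) (hη : 0 < η) (hε : 0 < ε)
    (hε2 : ε ≤ (s - 1) * η / 2) (hD : 1 - C * M ≤ D)
    (hfix : s * η * D + C < η + ε) (hb : b ≤ s * D * b + C * V)
    (hbpos : 0 < b) (hV : 0 ≤ V) (hM : 0 ≤ M) (hC : 0 ≤ C) :
    (b - η * V) * (s - 1) ≤ ε * (b * (2 * s * M)) := by
  have hCM : (s - 1) / (2 * s) < C * M := by
    have h1 : s * η * (1 - C * M) ≤ s * η * D :=
      mul_le_mul_of_nonneg_left hD (by positivity)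
    have h2 : s * η * (1 - C * M) < η + ε := by linarith
    rw [div_lt_iff₀ (by linarith : (0:ℝ) < 2 * s)]
    nlinarith
  have hkey : C * (b - η * V) ≤ ε * b := by
    have h1 : η * b ≤ s * η * D * b + C * (η * V) := by nlinarith
    have h2 : s * η * D * b ≤ (η + ε - C) * b := by nlinarith
    nlinarith
  rcases le_or_gt (b - η * V) 0 with hc | hc
  · have : 0 ≤ ε * (b * (2 * s * M)) := by positivity
    nlinarith
  · have e1 : (b - η * V) * ((s - 1) / (2 * s)) < (b - η * V) * (C * M) :=
      mul_lt_mul_of_pos_left hCM hc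
    have e2 : (2 * s * M) * (C * (b - η * V)) ≤ (2 * s * M) * (ε * b) :=
      mul_le_mul_of_nonneg_left hkey (by positivity)
    have e3 : (b - η * V) * ((s - 1) / (2 * s)) * (2 * s) = (b - η * V) * (s - 1) := by
      field_simp
    have e4 := mul_lt_mul_of_pos_right e1 (show (0:ℝ) < 2 * s by linarith)
    rw [e3] at e4
    nlinarith [e4, e2]

lemma master {n p : ℕ} {ι : Type*} [Fintype ι]
    (B : Matrix ι (Fin p × Fin n) ℝ) (s η V : ℝ)
    (z : Fin p × Fin n → ℝ) (hz : z ≠ 0) (hs : 1 < s) (hη : 0 < η)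
    (hzs : bl1 z ≤ s * blinf z)
    (Cf : Matrix ι (Fin n) ℝ → ℝ) (hCf : ∀ P, 0 ≤ Cf P) (hV : 0 ≤ V)
    (hPw : ∀ P : Matrix ι (Fin n) ℝ, vnorm (Pᵀ.mulVec (B.mulVec z)) ≤ Cf P * V)
    (M : Fin p → ℝ) (hM : ∀ i, 0 ≤ M i)
    (hPA : ∀ (i : Fin p) (P : Matrix ι (Fin n) ℝ),
      specNorm (Pᵀ * colBlock B i) ≤ Cf P * M i)
    (hfix : ∀ i : Fin p, sInf {r | ∃ P : Matrix ι (Fin n) ℝ,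
      r = s * η * (⨆ j : Fin p, specNorm (deltaId n i j - Pᵀ * colBlock B j)) + Cf P} ≤ η) :
    blinf z ≤ η * V := by
  obtain ⟨⟨iw, cw⟩, hzw⟩ := Function.ne_iff.mp hz
  haveI : Nonempty (Fin p) := ⟨iw⟩
  haveI : Nonempty (Fin n) := ⟨cw⟩
  obtain ⟨i0, hi0⟩ := Finite.exists_max (fun i => bnorm z i)
  have hbi : blinf z = bnorm z i0 := le_antisymm (ciSup_le hi0) (bnorm_le_blinf z i0)
  have hbpos : 0 < blinf z := blinf_pos hz
  have key : (blinf z - η * V) * (s - 1) ≤ 0 := by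
    apply eps_limit (show (0:ℝ) < (s - 1) * η / 2 by nlinarith)
      (show (0:ℝ) ≤ blinf z * (2 * s * M i0) from
        mul_nonneg hbpos.le (mul_nonneg (by linarith) (hM i0)))
    intro ε hε hεle
    have hne : Set.Nonempty {r | ∃ P : Matrix ι (Fin n) ℝ,
        r = s * η * (⨆ j : Fin p, specNorm (deltaId n i0 j - Pᵀ * colBlock B j)) + Cf P} :=
      ⟨_, 0, rfl⟩
    obtain ⟨a, ⟨P, rfl⟩, ha⟩ := Real.lt_sInf_add_pos hne hε
    have haη : s * η * (⨆ j : Fin p, specNorm (deltaId n i0 j - Pᵀ * colBlock B j)) + Cf P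
        < η + ε := lt_of_lt_of_le ha (by linarith [hfix i0])
    set D := ⨆ j : Fin p, specNorm (deltaId n i0 j - Pᵀ * colBlock B j) with hDdef
    have hDj : ∀ j : Fin p, specNorm (deltaId n i0 j - Pᵀ * colBlock B j) ≤ D := by
      intro j
      rw [hDdef]
      exact le_ciSup (f := fun j : Fin p =>
        specNorm (deltaId n i0 j - Pᵀ * colBlock B j))
        (Set.Finite.bddAbove (Set.finite_range _)) j
    have hD0 : 0 ≤ D := le_trans (specNorm_nonneg _) (hDj i0)
    have hcore : blinf z ≤ s * D * blinf z + Cf P * V := by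
      have h1 : bnorm z i0 = vnorm ((∑ j, (deltaId n i0 j - Pᵀ * colBlock B j).mulVec
          (fun c => z (j, c))) + Pᵀ.mulVec (B.mulVec z)) :=
        congrArg vnorm (block_decomp B P z i0)
      have h2 := vnorm_add_le (∑ j, (deltaId n i0 j - Pᵀ * colBlock B j).mulVec
          (fun c => z (j, c))) (Pᵀ.mulVec (B.mulVec z))
      have h3 := vnorm_sum_le (fun j => (deltaId n i0 j - Pᵀ * colBlock B j).mulVec
          (fun c => z (j, c)))
      have h4 : ∀ j : Fin p, vnorm ((deltaId n i0 j - Pᵀ * colBlock B j).mulVec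
          (fun c => z (j, c))) ≤ D * bnorm z j := fun j =>
        le_trans (vnorm_mulVec_le _ _) (mul_le_mul_of_nonneg_right (hDj j) (bnorm_nonneg z j))
      have h5 : ∑ j : Fin p, vnorm ((deltaId n i0 j - Pᵀ * colBlock B j).mulVec
          (fun c => z (j, c))) ≤ D * bl1 z := by
        rw [bl1, Finset.mul_sum]
        exact Finset.sum_le_sum (fun j _ => h4 j)
      have h6 : D * bl1 z ≤ D * (s * blinf z) := mul_le_mul_of_nonneg_left hzs hD0
      have h7 := hPw P
      calc blinf z = bnorm z i0 := hbi
        _ = _ := h1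
        _ ≤ _ := h2
        _ ≤ D * bl1 z + Cf P * V := add_le_add (le_trans h3 h5) h7
        _ ≤ D * (s * blinf z) + Cf P * V := by linarith
        _ = s * D * blinf z + Cf P * V := by ring_nf
    have hDlow : 1 - Cf P * M i0 ≤ D := by
      have h8 : specNorm (deltaId n i0 i0 - Pᵀ * colBlock B i0) ≤ D := hDj i0
      have h9 : deltaId n i0 i0 = 1 := by rw [deltaId, if_pos rfl]
      rw [h9] at h8
      have h10 := specNorm_one_sub_lower (Pᵀ * colBlock B i0)
      have h11 := hPA i0 P
      linarith
    exact arith_core hs hη hε hεle hDlow haη hcore hbpos hV (hM i0) (hCf P)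
  nlinarith [key]

lemma glue_bound {η ω : ℝ} (hη : 0 < η) (hlow : 1 / η ≤ ω) : 1 / ω ≤ η := by
  have hωpos : 0 < ω := lt_of_lt_of_le (one_div_pos.mpr hη) hlow
  rw [div_le_iff₀ hωpos]
  have h2 : (1 / η) * η ≤ ω * η := mul_le_mul_of_nonneg_right hlow (le_of_lt hη)
  rw [one_div, inv_mul_cancel₀ (ne_of_gt hη)] at h2
  linarith [mul_comm ω η ▸ h2]

end Infrastructure

/-- Theorem 4: for `1 < s < s_*`, the unique positive fixed point of
`g_s` is an upper bound on `1/ω₂(A,s)`, and the unique positive fixed point of `h_s`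
(built from `Q = AᵀA`) is an upper bound on `1/ω_{b∞}(AᵀA,s)`. -/
theorem stmt19 {m n p : ℕ} (A : Matrix (Fin m) (Fin p × Fin n) ℝ) (s sstar : ℝ)
    (g h : ℝ → ℝ)
    (hsstar : sstar = 1 / (⨆ i : Fin p, sInf {r | ∃ P : Matrix (Fin m) (Fin n) ℝ,
      r = ⨆ j : Fin p, specNorm (deltaId n i j - Pᵀ * colBlock A j)}))
    (hs1 : 1 < s) (hs2 : s < sstar)
    (hg : ∀ η, g η = ⨆ i : Fin p, sInf {r | ∃ P : Matrix (Fin m) (Fin n) ℝ,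
      r = s * η * (⨆ j : Fin p, specNorm (deltaId n i j - Pᵀ * colBlock A j)) + specNorm P})
    (hh : ∀ η, h η = ⨆ i : Fin p, sInf {r | ∃ P : Matrix (Fin p × Fin n) (Fin n) ℝ,
      r = s * η * (⨆ j : Fin p, specNorm (deltaId n i j - Pᵀ * colBlock (Aᵀ * A) j)) +
        ∑ l : Fin p, specNorm (rowBlock P l)}) :
    (∀ ηstar : ℝ, 0 < ηstar → g ηstar = ηstar → 1 / omega2 A s ≤ ηstar) ∧
    (∀ ηstar : ℝ, 0 < ηstar → h ηstar = ηstar → 1 / omegaBInf A s ≤ ηstar) := by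
  constructor
  · -- part 1
    intro ηstar hpos hfp
    rcases Set.eq_empty_or_nonempty {r | ∃ z : Fin p × Fin n → ℝ, z ≠ 0 ∧
        bl1 z ≤ s * blinf z ∧ r = vnorm (A.mulVec z) / blinf z} with hS | hS
    · rw [omega2, hS, Real.sInf_empty]
      rw [div_zero]
      exact le_of_lt hpos
    · apply glue_bound hpos
      rw [omega2]
      apply le_csInf hS
      rintro r ⟨z, hz, hzs, rfl⟩
      have hb : 0 < blinf z := blinf_pos hz
      have key : blinf z ≤ ηstar * vnorm (A.mulVec z) := by
        apply master (M := fun i => specNorm (colBlock A i))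
          A s ηstar (vnorm (A.mulVec z)) z hz hs1 hpos hzs
          (fun P => specNorm P) (fun P => specNorm_nonneg P) (vnorm_nonneg' _)
        · intro P
          have := vnorm_mulVec_le Pᵀ (A.mulVec z)
          rwa [specNorm_transpose] at this
        · exact fun i => specNorm_nonneg (colBlock A i)
        · intro i P
          have h1 := specNorm_mul_le Pᵀ (colBlock A i)
          rwa [specNorm_transpose] at h1
        · intro i
          have h1 : sInf {r | ∃ P : Matrix (Fin m) (Fin n) ℝ,
              r = s * ηstar * (⨆ j : Fin p, specNorm (deltaId n i j - Pᵀ * colBlock A j))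
                + specNorm P} ≤ ⨆ i : Fin p, sInf {r | ∃ P : Matrix (Fin m) (Fin n) ℝ,
              r = s * ηstar * (⨆ j : Fin p, specNorm (deltaId n i j - Pᵀ * colBlock A j))
                + specNorm P} :=
            le_ciSup (f := fun i : Fin p => sInf {r | ∃ P : Matrix (Fin m) (Fin n) ℝ,
              r = s * ηstar * (⨆ j : Fin p, specNorm (deltaId n i j - Pᵀ * colBlock A j))
                + specNorm P}) (Set.Finite.bddAbove (Set.finite_range _)) i
          rw [← hg ηstar, hfp] at h1
          exact h1
      have hV : 0 < vnorm (A.mulVec z) := by nlinarith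
      rw [div_le_div_iff₀ hpos hb]
      nlinarith
  · -- part 2
    intro ηstar hpos hfp
    rcases Set.eq_empty_or_nonempty {r | ∃ z : Fin p × Fin n → ℝ, z ≠ 0 ∧
        bl1 z ≤ s * blinf z ∧ r = blinf ((Aᵀ * A).mulVec z) / blinf z} with hS | hS
    · rw [omegaBInf, hS, Real.sInf_empty]
      rw [div_zero]
      exact le_of_lt hpos
    · apply glue_bound hpos
      rw [omegaBInf]
      apply le_csInf hS
      rintro r ⟨z, hz, hzs, rfl⟩
      have hb : 0 < blinf z := blinf_pos hz
      have key : blinf z ≤ ηstar * blinf ((Aᵀ * A).mulVec z) := by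
        apply master (M := fun i => ⨆ l : Fin p,
            specNorm (rowBlock (colBlock (Aᵀ * A) i) l))
          (Aᵀ * A) s ηstar (blinf ((Aᵀ * A).mulVec z)) z hz hs1 hpos hzs
          (fun P => ∑ l : Fin p, specNorm (rowBlock P l))
          (fun P => Finset.sum_nonneg (fun l _ => specNorm_nonneg _)) (blinf_nonneg _)
        · intro P
          rw [rowBlock_decomp]
          refine (vnorm_sum_le _).trans ?_
          rw [Finset.sum_mul]
          apply Finset.sum_le_sum
          intro l _
          have h1 := vnorm_mulVec_le (rowBlock P l)ᵀ (fun c => (Aᵀ * A).mulVec z (l, c))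
          rw [specNorm_transpose] at h1
          refine h1.trans ?_
          exact mul_le_mul_of_nonneg_left (bnorm_le_blinf _ l) (specNorm_nonneg _)
        · exact fun i => Real.iSup_nonneg (fun l => specNorm_nonneg _)
        · intro i P
          rw [mul_colBlock_decomp]
          refine (specNorm_sum_le _).trans ?_
          rw [Finset.sum_mul]
          apply Finset.sum_le_sum
          intro l _
          have h1 := specNorm_mul_le (rowBlock P l)ᵀ (rowBlock (colBlock (Aᵀ * A) i) l)
          rw [specNorm_transpose] at h1
          refine h1.trans ?_
          apply mul_le_mul_of_nonneg_left ?_ (specNorm_nonneg _)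
          exact le_ciSup (f := fun l : Fin p =>
            specNorm (rowBlock (colBlock (Aᵀ * A) i) l))
            (Set.Finite.bddAbove (Set.finite_range _)) l
        · intro i
          have h1 : sInf {r | ∃ P : Matrix (Fin p × Fin n) (Fin n) ℝ,
              r = s * ηstar * (⨆ j : Fin p,
                  specNorm (deltaId n i j - Pᵀ * colBlock (Aᵀ * A) j))
                + ∑ l : Fin p, specNorm (rowBlock P l)} ≤
              ⨆ i : Fin p, sInf {r | ∃ P : Matrix (Fin p × Fin n) (Fin n) ℝ,
              r = s * ηstar * (⨆ j : Fin p,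
                  specNorm (deltaId n i j - Pᵀ * colBlock (Aᵀ * A) j))
                + ∑ l : Fin p, specNorm (rowBlock P l)} :=
            le_ciSup (f := fun i : Fin p => sInf {r | ∃ P : Matrix (Fin p × Fin n) (Fin n) ℝ,
              r = s * ηstar * (⨆ j : Fin p,
                  specNorm (deltaId n i j - Pᵀ * colBlock (Aᵀ * A) j))
                + ∑ l : Fin p, specNorm (rowBlock P l)})
              (Set.Finite.bddAbove (Set.finite_range _)) i
          rw [← hh ηstar, hfp] at h1
          exact h1
      have hV : 0 < blinf ((Aᵀ * A).mulVec z) := by nlinarith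
      rw [div_le_div_iff₀ hpos hb]
      nlinarith
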